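/- Let T be an out-tree rooted at r in a digraph D, and suppose (x,y) is an arc of D with l_T(x) ≥ l_T(y) and y not an ancestor of x in T. Let T' be obtained from T by removing the arc of T with head y and adding the arc (x,y). Then T' is a spanning out-tree of D, l_{T'}(v) ≥ l_T(v) for every vertex v, and l_{T'}(y) > l_T(y). -/

import Mathlib

/-- An out-tree on `V`, encoded by its root and parent function: every vertex
reaches the root by iterating `parent`, and the root is its own parent. -/
structure OutTree (V : Type*) where
  root : V
  parent : V → V
  parent_root : parent root = root
  reach : ∀ v, ∃ n : ℕ, parent^[n] v = root

namespace OutTree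

variable {V : Type*}

/-- The level of `v`: the number of vertices on the directed path in `T`
from the root to `v`. -/
noncomputable def level (T : OutTree V) (v : V) : ℕ :=
  sInf {n : ℕ | T.parent^[n] v = T.root} + 1

/-- `u` is an ancestor of `v` in `T` (every vertex is an ancestor of itself). -/
def Anc (T : OutTree V) (u v : V) : Prop := ∃ n : ℕ, T.parent^[n] v = u

/-- `T` is a spanning out-tree of the digraph `D`: every tree arc (from parent
to child) is an arc of `D`. -/
def SpanningOf (T : OutTree V) (D : V → V → Prop) : Prop :=
  ∀ v, v ≠ T.root → D (T.parent v) v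

end OutTree

namespace OutTree

variable {V : Type*}

lemma level_root' (T : OutTree V) : T.level T.root = 1 := by
  unfold level
  have h0 : sInf {n : ℕ | T.parent^[n] T.root = T.root} = 0 :=
    Nat.sInf_eq_zero.2 (Or.inl (by simp))
  rw [h0]

lemma level_step (T : OutTree V) {v : V} (hv : v ≠ T.root) :
    T.level v = T.level (T.parent v) + 1 := by
  unfold level
  set Sv := {n : ℕ | T.parent^[n] v = T.root} with hSv
  set Sp := {n : ℕ | T.parent^[n] (T.parent v) = T.root} with hSp
  have hne : Sv.Nonempty := T.reach v
  have hnep : Sp.Nonempty := T.reach (T.parent v)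
  have ha : sInf Sv ∈ Sv := Nat.sInf_mem hne
  have h0 : sInf Sv ≠ 0 := by
    intro h; rw [h] at ha; exact hv ha
  obtain ⟨k, hk⟩ := Nat.exists_eq_succ_of_ne_zero h0
  have h1 : k ∈ Sp := by
    have := ha
    rw [hk] at this
    simpa [hSv, hSp, Function.iterate_succ_apply] using this
  have h2 : sInf Sp ≤ k := Nat.sInf_le h1
  have h3 : sInf Sp + 1 ∈ Sv := by
    have hb : sInf Sp ∈ Sp := Nat.sInf_mem hnep
    simpa [hSv, hSp, Function.iterate_succ_apply] using hb
  have h4 : sInf Sv ≤ sInf Sp + 1 := Nat.sInf_le h3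
  omega

end OutTree

/-- Rerooting step: if `(x, y)` is an arc of `D` with `level x ≥ level y` and
`y` not an ancestor of `x` in a spanning out-tree `T`, then replacing the tree
arc entering `y` by `(x, y)` yields a spanning out-tree `T'` in which no level
decreases and the level of `y` strictly increases. -/
theorem stmt19 {V : Type*} [Fintype V] [DecidableEq V] (D : V → V → Prop)
    (T : OutTree V) (hspan : T.SpanningOf D) (x y : V) (hxy : D x y)
    (hlev : T.level y ≤ T.level x) (hnanc : ¬ T.Anc y x) :
    ∃ T' : OutTree V, T'.root = T.root ∧
      T'.parent = Function.update T.parent y x ∧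
      T'.SpanningOf D ∧
      (∀ v, T.level v ≤ T'.level v) ∧ T.level y < T'.level y := by
  classical
  set p' := Function.update T.parent y x with hp'
  have hxny : x ≠ y := fun h => hnanc ⟨0, by simp [h]⟩
  have hyr : y ≠ T.root := by
    intro h
    obtain ⟨n, hn⟩ := T.reach x
    exact hnanc ⟨n, by rw [hn, h]⟩
  have hA : ∀ k, p'^[k] x = T.parent^[k] x := by
    intro k
    induction k with
    | zero => rfl
    | succ k ih =>
      rw [Function.iterate_succ_apply', Function.iterate_succ_apply', ih]
      have hne : T.parent^[k] x ≠ y := fun h => hnanc ⟨k, h⟩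
      exact Function.update_of_ne hne _ _
  have hxreach : ∃ n, p'^[n] x = T.root := by
    obtain ⟨n, hn⟩ := T.reach x
    exact ⟨n, by rw [hA n, hn]⟩
  have reach' : ∀ v, ∃ n, p'^[n] v = T.root := by
    intro v
    obtain ⟨n, hn⟩ := T.reach v
    induction n generalizing v with
    | zero => exact ⟨0, hn⟩
    | succ n ih =>
      by_cases hv : v = T.root
      · exact ⟨0, hv⟩
      by_cases hvy : v = y
      · obtain ⟨m, hm⟩ := hxreach
        refine ⟨m + 1, ?_⟩
        rw [Function.iterate_succ_apply]
        have : p' v = x := by rw [hvy]; exact Function.update_self _ _ _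
        rw [this, hm]
      · obtain ⟨m, hm⟩ := ih (T.parent v) (by
          rw [← Function.iterate_succ_apply]; exact hn)
        refine ⟨m + 1, ?_⟩
        rw [Function.iterate_succ_apply]
        have : p' v = T.parent v := Function.update_of_ne hvy _ _
        rw [this, hm]
  refine ⟨⟨T.root, p', Function.update_of_ne hyr.symm _ _ |>.trans T.parent_root, reach'⟩,
    rfl, rfl, ?_, ?_, ?_⟩
  case _ =>
    intro v hv
    by_cases hvy : v = y
    · subst hvy
      show D (p' v) v
      rw [hp', Function.update_self]
      exact hxy
    · show D (p' v) v
      rw [hp', Function.update_of_ne hvy]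
      exact hspan v hv
  all_goals {
    set T' : OutTree V := ⟨T.root, p',
      Function.update_of_ne hyr.symm _ _ |>.trans T.parent_root, reach'⟩ with hT'
    have lemB : ∀ n v, p'^[n] v = T.root → T.level v ≤ n + 1 := by
      intro n
      induction n with
      | zero =>
        intro v hv
        simp only [Function.iterate_zero, id_eq] at hv
        rw [hv, T.level_root']
      | succ n ih =>
        intro v hv
        by_cases hvr : v = T.root
        · rw [hvr, T.level_root']; omega
        by_cases hvy : v = y
        · have hx : p'^[n] x = T.root := by
            have : p' v = x := by rw [hvy]; exact Function.update_self _ _ _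
            rw [Function.iterate_succ_apply, this] at hv
            exact hv
          have := ih x hx
          subst hvy
          omega
        · have hpv : p'^[n] (T.parent v) = T.root := by
            have : p' v = T.parent v := Function.update_of_ne hvy _ _
            rw [Function.iterate_succ_apply, this] at hv
            exact hv
          have := ih (T.parent v) hpv
          rw [T.level_step hvr]
          omega
    have hmono : ∀ v, T.level v ≤ T'.level v := by
      intro v
      have hne : {n : ℕ | T'.parent^[n] v = T'.root}.Nonempty := T'.reach v
      have hmem := Nat.sInf_mem hne
      have : T.level v ≤ sInf {n : ℕ | T'.parent^[n] v = T'.root} + 1 :=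
        lemB _ v hmem
      exact this
    first
    | exact hmono
    | {
      have hy' : T'.level y = T'.level x + 1 := by
        have := T'.level_step (v := y) hyr
        rw [this]
        congr 1
        have : T'.parent y = x := Function.update_self _ _ _
        rw [this]
      have := hmono x
      rw [hy']
      omega }
  }
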